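/- Let a₁, a₂, a₃, a₄ ∈ ℂ satisfy Im(aⱼ) < 0 for j = 1,…,4 and aⱼ² ≠ aₖ² for all j ≠ k. Then (1/(π i)) ∫_ℝ y² / ∏_{j=1}^{4} ((aⱼ + y)(aⱼ − y)) dy = Σ_{j=1}^{4} aⱼ / ∏_{k=1, k ≠ j}^{4} (aₖ² − aⱼ²). -/

import Mathlib

open MeasureTheory Complex Filter Topology

lemma rb_sq_ne {a : ℂ} (ha : a.im < 0) (y : ℝ) : a ^ 2 ≠ ((y : ℂ)) ^ 2 := by
  intro h
  have him : (a ^ 2).im = 0 := by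
    rw [h]; simp [← Complex.ofReal_pow]
  have hre : (a ^ 2).re = y ^ 2 := by
    rw [h]; simp [← Complex.ofReal_pow]
  rw [sq, Complex.mul_im] at him
  rw [sq, Complex.mul_re] at hre
  have hre0 : a.re = 0 := by
    rcases mul_eq_zero.mp (by linarith : a.re * a.im = 0) with h' | h'
    · exact h'
    · exact absurd h' (ne_of_lt ha)
  nlinarith [sq_nonneg y, sq_nonneg a.im]

lemma rb_factor_ne {a : ℂ} (ha : a.im < 0) (y : ℝ) : (a + y) * (a - y) ≠ 0 := by
  have : (a + y) * (a - y) = a ^ 2 - (y:ℂ)^2 := by ring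
  rw [this]
  exact sub_ne_zero.mpr (rb_sq_ne ha y)

lemma rb_poly {A B s : ℝ} (hA : 0 ≤ A) (hB : 0 < B) (hs : 0 ≤ s) :
    B^2*(1+s)^2 ≤ (1+A+B)^2*((s-A)^2+2*B*(A+s)+B^2) := by
  rcases le_total A s with h | h
  · have h1 : B*(1+s) ≤ (1+A+B)*(s-A+B) := by nlinarith
    have h2 : (s-A+B)^2 ≤ (s-A)^2+2*B*(A+s)+B^2 := by nlinarith
    calc B^2*(1+s)^2 = (B*(1+s))^2 := by ring
      _ ≤ ((1+A+B)*(s-A+B))^2 := by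
          apply pow_le_pow_left₀ (by positivity) h1
      _ = (1+A+B)^2*(s-A+B)^2 := by ring
      _ ≤ _ := by nlinarith [sq_nonneg (1+A+B)]
  · have h1 : B*(1+s) ≤ (1+A+B)*(A-s+B) := by nlinarith
    have h2 : (A-s+B)^2 ≤ (s-A)^2+2*B*(A+s)+B^2 := by nlinarith
    calc B^2*(1+s)^2 = (B*(1+s))^2 := by ring
      _ ≤ ((1+A+B)*(A-s+B))^2 := by
          apply pow_le_pow_left₀ (by positivity) h1
      _ = (1+A+B)^2*(A-s+B)^2 := by ring
      _ ≤ _ := by nlinarith [sq_nonneg (1+A+B)]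

lemma rb_integrable {a : ℂ} (ha : a.im < 0) :
    Integrable (fun y : ℝ => 1 / ((a + y) * (a - y))) := by
  have hcont : Continuous fun y : ℝ => 1 / ((a + y) * (a - y)) := by
    apply Continuous.div continuous_const (by fun_prop)
    exact fun y => rb_factor_ne ha y
  have hβ : 0 < a.im ^ 2 := pow_two_pos_of_ne_zero (ne_of_lt ha)
  refine (integrable_inv_one_add_sq.const_mul ((1 + a.re^2 + a.im^2)/a.im^2)).mono'
    hcont.aestronglyMeasurable (Filter.Eventually.of_forall fun y => ?_)
  have h1 : (0:ℝ) < 1 + y^2 := by positivity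
  have hD : 0 < ‖(a + y) * (a - y)‖ := norm_pos_iff.mpr (rb_factor_ne ha y)
  have hD2 : (‖(a + y) * (a - y)‖)^2
      = ((a.re + y)^2 + a.im^2) * ((a.re - y)^2 + a.im^2) := by
    rw [Complex.sq_norm, Complex.normSq_mul]
    simp [Complex.normSq_apply]
    ring
  have key : a.im^2 * (1 + y^2) ≤ (1 + a.re^2 + a.im^2) * ‖(a + y) * (a - y)‖ := by
    have h2 : (a.im^2 * (1 + y^2))^2 ≤ ((1 + a.re^2 + a.im^2) * ‖(a + y) * (a - y)‖)^2 := by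
      rw [mul_pow, mul_pow, hD2]
      have key2 := rb_poly (A := a.re^2) (B := a.im^2) (s := y^2) (by positivity) hβ (by positivity)
      nlinarith [key2]
    have hR : 0 ≤ (1 + a.re^2 + a.im^2) * ‖(a + y) * (a - y)‖ := by positivity
    exact le_of_pow_le_pow_left₀ two_ne_zero hR h2
  rw [norm_div, norm_one]
  have hRHS : (1 + a.re^2 + a.im^2)/a.im^2 * (1+y^2)⁻¹
      = (1 + a.re^2 + a.im^2)/(a.im^2*(1+y^2)) := by
    field_simp
  rw [hRHS, div_le_div_iff₀ hD (by positivity)]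
  nlinarith [key]

section
variable {a : ℂ}

lemma rb_add_ne (ha : a.im < 0) (y : ℝ) : a + y ≠ 0 := by
  intro h
  have : (a + (y:ℂ)).im = 0 := by rw [h]; simp
  simp at this; exact absurd this (ne_of_lt ha)

lemma rb_sub_ne (ha : a.im < 0) (y : ℝ) : a - y ≠ 0 := by
  intro h
  have : (a - (y:ℂ)).im = 0 := by rw [h]; simp
  simp at this; exact absurd this (ne_of_lt ha)

lemma rb_deriv (ha : a.im < 0) (y : ℝ) :
    HasDerivAt (fun t : ℝ => Complex.log (a + t) - Complex.log (a - t))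
      ((a + y)⁻¹ + (a - y)⁻¹) y := by
  have hs1 : a + (y:ℂ) ∈ Complex.slitPlane := Or.inr (by simp [ne_of_lt ha])
  have hs2 : a - (y:ℂ) ∈ Complex.slitPlane := Or.inr (by simp [ne_of_lt ha])
  have h1 : HasDerivAt (fun z : ℂ => Complex.log (a + z)) ((a + y)⁻¹ * 1) (y : ℂ) :=
    (Complex.hasDerivAt_log hs1).comp _ ((hasDerivAt_id _).const_add a)
  have h2 : HasDerivAt (fun z : ℂ => Complex.log (a - z)) ((a - y)⁻¹ * (-1)) (y : ℂ) :=
    (Complex.hasDerivAt_log hs2).comp _ ((hasDerivAt_id _).const_sub a)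
  have := (h1.sub h2).comp_ofReal
  convert this using 1
  · rfl
  ring

lemma rb_tendsto_log (ha : a.im < 0) :
    Tendsto (fun y : ℝ => Complex.log (a + y) - Complex.log (a - y)) atTop
      (𝓝 ((Real.pi : ℂ) * Complex.I)) := by
  have habs1 : Tendsto (fun y : ℝ => ‖a + y‖) atTop atTop := by
    apply tendsto_atTop_mono (fun y => ?_) (tendsto_atTop_add_const_left _ a.re tendsto_id)
    calc a.re + y = (a + (y:ℂ)).re := by simp
      _ ≤ ‖a + y‖ := Complex.re_le_norm _
  have habs2 : Tendsto (fun y : ℝ => ‖a - y‖) atTop atTop := by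
    apply tendsto_atTop_mono (fun y => ?_) (tendsto_atTop_add_const_left _ (-a.re) tendsto_id)
    calc -a.re + y = -((a - (y:ℂ)).re) := by simp; ring
      _ ≤ |(a - (y:ℂ)).re| := neg_le_abs _
      _ ≤ ‖a - y‖ := Complex.abs_re_le_norm _
  have hratio : Tendsto (fun y : ℝ => (a + y) / (a - y)) atTop (𝓝 (-1)) := by
    have h0 : Tendsto (fun y : ℝ => 2*a / (a - y)) atTop (𝓝 0) := by
      rw [tendsto_zero_iff_norm_tendsto_zero]
      simp only [norm_div]
      exact Filter.Tendsto.div_atTop tendsto_const_nhds habs2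
    have heq : ∀ᶠ y : ℝ in atTop, -1 + 2*a/(a - y) = (a + y)/(a - y) := by
      filter_upwards with y
      field_simp [rb_sub_ne ha y]
      ring
    have hc : Tendsto (fun _ : ℝ => (-1 : ℂ)) atTop (𝓝 (-1)) := tendsto_const_nhds
    have := hc.add h0
    simp only [add_zero] at this
    exact (this.congr' heq)
  have hlogabs : Tendsto
      (fun y : ℝ => Real.log (‖a+y‖) - Real.log (‖a-y‖)) atTop (𝓝 0) := by
    have h1 := (continuous_norm.tendsto (-1)).comp hratio
    rw [show ‖(-1:ℂ)‖ = 1 by simp] at h1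
    have h2 := ((Real.continuousAt_log one_ne_zero).tendsto).comp h1
    rw [Real.log_one] at h2
    apply h2.congr
    intro y
    simp only [Function.comp_apply]
    rw [norm_div, Real.log_div (norm_ne_zero_iff.mpr (rb_add_ne ha y))
      (norm_ne_zero_iff.mpr (rb_sub_ne ha y))]
  have harg1 : Tendsto (fun y : ℝ => Complex.arg (a + y)) atTop (𝓝 0) := by
    have hr : Tendsto (fun y : ℝ => a.im / ‖a+y‖) atTop (𝓝 0) :=
      Filter.Tendsto.div_atTop tendsto_const_nhds habs1
    have h := (Real.continuous_arcsin.tendsto 0).comp hr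
    rw [Real.arcsin_zero] at h
    apply h.congr'
    filter_upwards [eventually_ge_atTop (-a.re)] with y hy
    rw [Complex.arg_of_re_nonneg (by simp; linarith)]
    simp
  have harg2 : Tendsto (fun y : ℝ => Complex.arg (a - y)) atTop (𝓝 (-Real.pi)) := by
    have hr : Tendsto (fun y : ℝ => -a.im / ‖a-y‖) atTop (𝓝 0) :=
      Filter.Tendsto.div_atTop tendsto_const_nhds habs2
    have h := ((Real.continuous_arcsin.tendsto 0).comp hr).sub_const Real.pi
    rw [Real.arcsin_zero, zero_sub] at h
    apply h.congr'
    filter_upwards [eventually_gt_atTop a.re] with y hy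
    rw [Complex.arg_of_re_neg_of_im_neg (by simp; linarith) (by simpa using ha)]
    simp
  have him' : Tendsto (fun y : ℝ => Complex.arg (a+y) - Complex.arg (a-y)) atTop
      (𝓝 Real.pi) := by
    have := harg1.sub harg2
    simpa using this
  have hfun : (fun y : ℝ => Complex.log (a + y) - Complex.log (a - y))
      = fun y : ℝ => ((Real.log (‖a+y‖) - Real.log (‖a-y‖) : ℝ) : ℂ)
        + ((Complex.arg (a+y) - Complex.arg (a-y) : ℝ) : ℂ) * Complex.I := by
    funext y
    simp only [Complex.log]
    push_cast
    ring
  rw [hfun]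
  have := hlogabs.ofReal.add (him'.ofReal.mul_const Complex.I)
  simpa using this

lemma rb_integral (ha : a.im < 0) :
    ∫ y : ℝ, 1 / ((a + y) * (a - y)) = (Real.pi : ℂ) * Complex.I / a := by
  have ha0 : a ≠ 0 := fun h => by simp [h] at ha
  set F : ℝ → ℂ := fun y => Complex.log (a + y) - Complex.log (a - y) with hF
  have hcd : Continuous fun y : ℝ => (a + (y:ℂ))⁻¹ + (a - (y:ℂ))⁻¹ := by
    apply Continuous.add
    · exact (continuous_const.add Complex.continuous_ofReal).inv₀ (fun y => rb_add_ne ha y)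
    · exact (continuous_const.sub Complex.continuous_ofReal).inv₀ (fun y => rb_sub_ne ha y)
  have hivI : ∀ T : ℝ, (∫ y in (-T)..T, ((a + (y:ℂ))⁻¹ + (a - (y:ℂ))⁻¹)) = F T - F (-T) :=
    fun T => intervalIntegral.integral_eq_sub_of_hasDerivAt (fun y _ => rb_deriv ha y)
      (hcd.intervalIntegrable _ _)
  have hsymm : ∀ T : ℝ, F (-T) = - F T := by
    intro T
    simp only [hF]
    rw [Complex.ofReal_neg, ← sub_eq_add_neg, sub_neg_eq_add]
    ring
  have hptw : ∀ y : ℝ, 1 / ((a + (y:ℂ)) * (a - (y:ℂ)))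
      = (2*a)⁻¹ * ((a + (y:ℂ))⁻¹ + (a - (y:ℂ))⁻¹) := by
    intro y
    field_simp [rb_add_ne ha y, rb_sub_ne ha y]
    ring
  have hInt := rb_integrable ha
  have h1 : Tendsto (fun T : ℝ => ∫ y in (-T)..T, 1 / ((a + (y:ℂ)) * (a - (y:ℂ)))) atTop
      (𝓝 (∫ y : ℝ, 1 / ((a + (y:ℂ)) * (a - (y:ℂ))))) :=
    intervalIntegral_tendsto_integral hInt tendsto_neg_atTop_atBot tendsto_id
  have h2 : Tendsto (fun T : ℝ => ∫ y in (-T)..T, 1 / ((a + (y:ℂ)) * (a - (y:ℂ)))) atTop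
      (𝓝 ((2*a)⁻¹ * ((Real.pi : ℂ) * Complex.I + (Real.pi : ℂ) * Complex.I))) := by
    have hEq : ∀ T : ℝ, (∫ y in (-T)..T, 1 / ((a + (y:ℂ)) * (a - (y:ℂ))))
        = (2*a)⁻¹ * (F T + F T) := by
      intro T
      rw [intervalIntegral.integral_congr (g := fun y : ℝ => (2*a)⁻¹ * ((a + (y:ℂ))⁻¹ + (a - (y:ℂ))⁻¹))
        (fun y _ => hptw y), intervalIntegral.integral_const_mul, hivI, hsymm, sub_neg_eq_add]
    simp only [hEq]
    exact tendsto_const_nhds.mul ((rb_tendsto_log ha).add (rb_tendsto_log ha))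
  rw [tendsto_nhds_unique h1 h2]
  field_simp
  ring

set_option maxHeartbeats 1000000 in
lemma rb_key (b₀ b₁ b₂ b₃ w : ℂ) :
    b₀ * ((b₁-w)*((b₂-w)*(b₃-w))) * (((b₀-b₁)*((b₂-b₁)*(b₃-b₁))) * (((b₀-b₂)*((b₁-b₂)*(b₃-b₂))) * ((b₀-b₃)*((b₁-b₃)*(b₂-b₃)))))
  + b₁ * ((b₀-w)*((b₂-w)*(b₃-w))) * (((b₁-b₀)*((b₂-b₀)*(b₃-b₀))) * (((b₀-b₂)*((b₁-b₂)*(b₃-b₂))) * ((b₀-b₃)*((b₁-b₃)*(b₂-b₃)))))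
  + b₂ * ((b₀-w)*((b₁-w)*(b₃-w))) * (((b₁-b₀)*((b₂-b₀)*(b₃-b₀))) * (((b₀-b₁)*((b₂-b₁)*(b₃-b₁))) * ((b₀-b₃)*((b₁-b₃)*(b₂-b₃)))))
  + b₃ * ((b₀-w)*((b₁-w)*(b₂-w))) * (((b₁-b₀)*((b₂-b₀)*(b₃-b₀))) * (((b₀-b₁)*((b₂-b₁)*(b₃-b₁))) * ((b₀-b₂)*((b₁-b₂)*(b₃-b₂)))))
  = w * (((b₁-b₀)*((b₂-b₀)*(b₃-b₀))) * (((b₀-b₁)*((b₂-b₁)*(b₃-b₁))) * (((b₀-b₂)*((b₁-b₂)*(b₃-b₂))) * ((b₀-b₃)*((b₁-b₃)*(b₂-b₃)))))) := by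
  ring

lemma rb_fourdiv (n₀ n₁ n₂ n₃ x₀ x₁ x₂ x₃ : ℂ) (h₀ : x₀ ≠ 0) (h₁ : x₁ ≠ 0) (h₂ : x₂ ≠ 0)
    (h₃ : x₃ ≠ 0) :
    n₀/x₀ + n₁/x₁ + n₂/x₂ + n₃/x₃
      = (n₀*(x₁*(x₂*x₃)) + n₁*(x₀*(x₂*x₃)) + n₂*(x₀*(x₁*x₃)) + n₃*(x₀*(x₁*x₂)))
        / (x₀*(x₁*(x₂*x₃))) := by
  field_simp

set_option maxHeartbeats 1000000 in
lemma rb_pf (b₀ b₁ b₂ b₃ w : ℂ)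
    (h0 : b₀ - w ≠ 0) (h1 : b₁ - w ≠ 0) (h2 : b₂ - w ≠ 0) (h3 : b₃ - w ≠ 0)
    (d10 : b₁ - b₀ ≠ 0) (d20 : b₂ - b₀ ≠ 0) (d30 : b₃ - b₀ ≠ 0)
    (d01 : b₀ - b₁ ≠ 0) (d21 : b₂ - b₁ ≠ 0) (d31 : b₃ - b₁ ≠ 0)
    (d02 : b₀ - b₂ ≠ 0) (d12 : b₁ - b₂ ≠ 0) (d32 : b₃ - b₂ ≠ 0)
    (d03 : b₀ - b₃ ≠ 0) (d13 : b₁ - b₃ ≠ 0) (d23 : b₂ - b₃ ≠ 0) :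
    w / ((b₀ - w) * (b₁ - w) * (b₂ - w) * (b₃ - w)) =
      b₀ / ((b₁ - b₀) * ((b₂ - b₀) * (b₃ - b₀))) * (1 / (b₀ - w)) +
          b₁ / ((b₀ - b₁) * ((b₂ - b₁) * (b₃ - b₁))) * (1 / (b₁ - w)) +
        b₂ / ((b₀ - b₂) * ((b₁ - b₂) * (b₃ - b₂))) * (1 / (b₂ - w)) +
      b₃ / ((b₀ - b₃) * ((b₁ - b₃) * (b₂ - b₃))) * (1 / (b₃ - w)) := by
  have hP0 : (b₁ - b₀) * ((b₂ - b₀) * (b₃ - b₀)) ≠ 0 := mul_ne_zero d10 (mul_ne_zero d20 d30)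
  have hP1 : (b₀ - b₁) * ((b₂ - b₁) * (b₃ - b₁)) ≠ 0 := mul_ne_zero d01 (mul_ne_zero d21 d31)
  have hP2 : (b₀ - b₂) * ((b₁ - b₂) * (b₃ - b₂)) ≠ 0 := mul_ne_zero d02 (mul_ne_zero d12 d32)
  have hP3 : (b₀ - b₃) * ((b₁ - b₃) * (b₂ - b₃)) ≠ 0 := mul_ne_zero d03 (mul_ne_zero d13 d23)
  have hM : (b₁ - b₀) * ((b₂ - b₀) * (b₃ - b₀)) *
      ((b₀ - b₁) * ((b₂ - b₁) * (b₃ - b₁)) *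
        ((b₀ - b₂) * ((b₁ - b₂) * (b₃ - b₂)) * ((b₀ - b₃) * ((b₁ - b₃) * (b₂ - b₃))))) ≠ 0 :=
    mul_ne_zero hP0 (mul_ne_zero hP1 (mul_ne_zero hP2 hP3))
  rw [show (b₀ - w) * (b₁ - w) * (b₂ - w) * (b₃ - w)
      = (b₀ - w) * ((b₁ - w) * ((b₂ - w) * (b₃ - w))) from by ring]
  rw [mul_one_div, mul_one_div, mul_one_div, mul_one_div,
    rb_fourdiv _ _ _ _ _ _ _ _ h0 h1 h2 h3]
  rw [div_mul_eq_mul_div, div_mul_eq_mul_div, div_mul_eq_mul_div, div_mul_eq_mul_div,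
    rb_fourdiv _ _ _ _ _ _ _ _ hP0 hP1 hP2 hP3, rb_key, mul_div_cancel_right₀ _ hM]

theorem rational_beta_deBranges_Wilson_residues (a : Fin 4 → ℂ)
    (him : ∀ j, (a j).im < 0)
    (hne : ∀ j k, j ≠ k → a j ^ 2 ≠ a k ^ 2) :
    (1 / ((Real.pi : ℂ) * Complex.I)) *
        ∫ y : ℝ, ((y : ℂ) ^ 2) / ∏ j, ((a j + (y : ℂ)) * (a j - (y : ℂ))) =
      ∑ j, a j / ∏ k ∈ Finset.univ.erase j, (a k ^ 2 - a j ^ 2) := by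
  have hπ : (Real.pi : ℂ) * Complex.I ≠ 0 :=
    mul_ne_zero (by exact_mod_cast Real.pi_ne_zero) Complex.I_ne_zero
  have ha0 : ∀ j, a j ≠ 0 := fun j h => by
    have := him j; rw [h] at this; simp at this
  have hE0 : (Finset.univ.erase (0:Fin 4)) = {1,2,3} := by decide
  have hE1 : (Finset.univ.erase (1:Fin 4)) = {0,2,3} := by decide
  have hE2 : (Finset.univ.erase (2:Fin 4)) = {0,1,3} := by decide
  have hE3 : (Finset.univ.erase (3:Fin 4)) = {0,1,2} := by decide
  set c : Fin 4 → ℂ := fun j => a j ^ 2 / ∏ k ∈ Finset.univ.erase j, (a k ^ 2 - a j ^ 2) with hc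
  have hb : ∀ j (y : ℝ), a j ^ 2 - ((y:ℂ))^2 ≠ 0 := fun j y => sub_ne_zero.mpr (rb_sq_ne (him j) y)
  have hd : ∀ j k, j ≠ k → a j ^ 2 - a k ^ 2 ≠ 0 := fun j k h => sub_ne_zero.mpr (hne j k h)
  have hpf : ∀ y : ℝ, ((y:ℂ)^2) / ∏ j, ((a j + y) * (a j - y))
      = ∑ j, c j * (1 / ((a j + y) * (a j - y))) := by
    intro y
    have hprod : ∀ j, (a j + (y:ℂ)) * (a j - y) = a j ^ 2 - (y:ℂ)^2 := fun j => by ring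
    simp only [Fin.sum_univ_four, Fin.prod_univ_four, hprod, hc, hE0, hE1, hE2, hE3]
    rw [Finset.prod_insert (by decide), Finset.prod_insert (by decide), Finset.prod_singleton,
        Finset.prod_insert (by decide), Finset.prod_insert (by decide), Finset.prod_singleton,
        Finset.prod_insert (by decide), Finset.prod_insert (by decide), Finset.prod_singleton,
        Finset.prod_insert (by decide), Finset.prod_insert (by decide), Finset.prod_singleton]
    exact rb_pf _ _ _ _ _ (hb 0 y) (hb 1 y) (hb 2 y) (hb 3 y)
      (hd 1 0 (by decide)) (hd 2 0 (by decide)) (hd 3 0 (by decide))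
      (hd 0 1 (by decide)) (hd 2 1 (by decide)) (hd 3 1 (by decide))
      (hd 0 2 (by decide)) (hd 1 2 (by decide)) (hd 3 2 (by decide))
      (hd 0 3 (by decide)) (hd 1 3 (by decide)) (hd 2 3 (by decide))
  have hIlem : ∀ j : Fin 4, Integrable (fun y : ℝ => c j * (1 / ((a j + y) * (a j - y)))) :=
    fun j => (rb_integrable (him j)).const_mul (c j)
  have hI : (∫ y : ℝ, ((y:ℂ)^2) / ∏ j, ((a j + y) * (a j - y)))
      = ∑ j : Fin 4, c j * ((Real.pi:ℂ) * Complex.I / a j) := by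
    have hfun : (fun y : ℝ => ((y:ℂ)^2) / ∏ j, ((a j + y) * (a j - y)))
        = fun y : ℝ => ∑ j : Fin 4, c j * (1 / ((a j + y) * (a j - y))) := funext hpf
    rw [hfun, integral_finset_sum _ (fun j _ => hIlem j)]
    refine Finset.sum_congr rfl fun j _ => ?_
    rw [MeasureTheory.integral_const_mul, rb_integral (him j)]
  rw [hI, Finset.mul_sum]
  refine Finset.sum_congr rfl fun j _ => ?_
  have hPne : (∏ k ∈ Finset.univ.erase j, (a k ^ 2 - a j ^ 2)) ≠ 0 :=
    Finset.prod_ne_zero_iff.mpr fun k hk => hd k j (Finset.mem_erase.mp hk).1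
  obtain ⟨P, hP⟩ : ∃ P, ∏ k ∈ Finset.univ.erase j, (a k ^ 2 - a j ^ 2) = P := ⟨_, rfl⟩
  rw [hP] at hPne
  rw [hc]
  simp only [hP]
  field_simp
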